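/- Let n ≥ 2, 1 ≤ r < n, C = r·(binom(n-1,r-1))⁻¹. If τ : [s₀, ∞) → [-1,1] is a C¹ solution of τ'(s) = C√(1-τ(s)^(2/r))·tanh^(r-1)(s) - (n-r)·coth(s)·τ(s) (the hyperbolic-sphere case), τ is eventually monotone, and τ'(s) → 0 as s → ∞, then lim_{s→∞} τ(s) = L, where L ∈ (0,1) is the unique positive root of C√(1-L^(2/r)) = (n-r)L. -/

import Mathlib

open Real Set Filter

lemma exp_neg_two_tendsto : Tendsto (fun s : ℝ => Real.exp (-(2*s))) atTop (nhds 0) :=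
  Real.tendsto_exp_atBot.comp (tendsto_neg_atTop_atBot.comp (tendsto_id.const_mul_atTop two_pos))

lemma coth_tendsto_one : Tendsto (fun s : ℝ => Real.cosh s / Real.sinh s) atTop (nhds 1) := by
  have hone : Tendsto (fun _ : ℝ => (1:ℝ)) atTop (nhds 1) := tendsto_const_nhds
  have h : Tendsto (fun s : ℝ => (1 + Real.exp (-(2*s))) / (1 - Real.exp (-(2*s)))) atTop (nhds 1) := by
    have := (hone.add exp_neg_two_tendsto).div
      (hone.sub exp_neg_two_tendsto) (show (1:ℝ) - 0 ≠ 0 by norm_num)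
    simp only [add_zero, sub_zero, div_one] at this
    exact this
  refine h.congr' ?_
  filter_upwards [eventually_gt_atTop (0:ℝ)] with s hs
  have hx1 : 1 < Real.exp s := Real.one_lt_exp_iff.mpr hs
  rw [Real.cosh_eq, Real.sinh_eq, show -(2*s) = -s + -s by ring, Real.exp_add, Real.exp_neg]
  have hx0 : Real.exp s ≠ 0 := (Real.exp_pos s).ne'
  have h4 : (Real.exp s)⁻¹ < 1 := inv_lt_one_of_one_lt₀ hx1
  have h5 : 0 < (Real.exp s)⁻¹ := by positivity
  have h2 : Real.exp s - (Real.exp s)⁻¹ ≠ 0 := by intro h; nlinarith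
  have h3 : 1 - (Real.exp s)⁻¹ * (Real.exp s)⁻¹ ≠ 0 := by intro h; nlinarith
  field_simp

lemma tanh_tendsto_one : Tendsto Real.tanh atTop (nhds 1) := by
  have hone : Tendsto (fun _ : ℝ => (1:ℝ)) atTop (nhds 1) := tendsto_const_nhds
  have h : Tendsto (fun s : ℝ => (1 - Real.exp (-(2*s))) / (1 + Real.exp (-(2*s)))) atTop (nhds 1) := by
    have := (hone.sub exp_neg_two_tendsto).div
      (hone.add exp_neg_two_tendsto) (show (1:ℝ) + 0 ≠ 0 by norm_num)
    simp only [add_zero, sub_zero, div_one] at this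
    exact this
  refine h.congr' ?_
  filter_upwards [eventually_gt_atTop (0:ℝ)] with s hs
  have hx1 : 1 < Real.exp s := Real.one_lt_exp_iff.mpr hs
  rw [Real.tanh_eq_sinh_div_cosh, Real.cosh_eq, Real.sinh_eq,
    show -(2*s) = -s + -s by ring, Real.exp_add, Real.exp_neg]
  have hx0 : Real.exp s ≠ 0 := (Real.exp_pos s).ne'
  have h5 : 0 < (Real.exp s)⁻¹ := by positivity
  have h2 : Real.exp s + (Real.exp s)⁻¹ ≠ 0 := by positivity
  have h3 : 1 + (Real.exp s)⁻¹ * (Real.exp s)⁻¹ ≠ 0 := by positivity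
  field_simp

/-- Asymptotics of the τ-function of rotational translators to r-MCF in ℍⁿ×ℝ:
an eventually monotone solution whose derivative tends to 0 converges to the unique
positive root L of C√(1-L^(2/r)) = (n-r)L. -/
theorem tau_hyperbolic_limit (n r : ℕ) (hn : 2 ≤ n) (hr1 : 1 ≤ r) (hr2 : r < n)
    (C : ℝ) (hC : C = (r : ℝ) * ((n - 1).choose (r - 1) : ℝ)⁻¹)
    (s₀ : ℝ) (hs₀ : 0 < s₀) (τ : ℝ → ℝ)
    (hmem : ∀ s ∈ Ici s₀, τ s ∈ Icc (-1 : ℝ) 1)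
    (hode : ∀ s ∈ Ici s₀, HasDerivAt τ
      (C * Real.sqrt (1 - τ s ^ ((2 : ℝ) / r)) * Real.tanh s ^ (r - 1)
        - ((n : ℝ) - r) * (Real.cosh s / Real.sinh s) * τ s) s)
    (hmono : ∃ a ≥ s₀, MonotoneOn τ (Ici a) ∨ AntitoneOn τ (Ici a))
    (hderiv : Tendsto (deriv τ) atTop (nhds 0))
    (L : ℝ) (hL : L ∈ Ioo (0 : ℝ) 1)
    (hLroot : C * Real.sqrt (1 - L ^ ((2 : ℝ) / r)) = ((n : ℝ) - r) * L) :
    Tendsto τ atTop (nhds L) := by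
  obtain ⟨a, ha, hcase⟩ := hmono
  have hC0 : 0 < C := by
    have h1 : 0 < (n-1).choose (r-1) := Nat.choose_pos (by omega)
    have h2 : (0:ℝ) < r := by exact_mod_cast hr1
    rw [hC]
    have : (0:ℝ) < ((n-1).choose (r-1) : ℝ) := by exact_mod_cast h1
    positivity
  have hnr : (0:ℝ) < (n:ℝ) - r := by
    have : (r:ℝ) < n := by exact_mod_cast hr2
    linarith
  have hexp0 : (0:ℝ) < (2:ℝ)/r := by
    have h2 : (0:ℝ) < r := by exact_mod_cast hr1
    positivity
  -- existence of the limit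
  have hlim : ∃ M, Tendsto τ atTop (nhds M) := by
    rcases hcase with hmon | hant
    · set f : ℝ → ℝ := fun s => τ (max s a) with hf
      have hfm : Monotone f := fun s t hst =>
        hmon (le_max_right s a) (le_max_right t a) (max_le_max hst le_rfl)
      have hbdd : BddAbove (range f) := by
        refine ⟨1, ?_⟩
        rintro x ⟨s, rfl⟩
        exact (hmem _ (le_trans ha (le_max_right s a))).2
      refine ⟨⨆ s, f s, (tendsto_atTop_ciSup hfm hbdd).congr' ?_⟩
      filter_upwards [eventually_ge_atTop a] with s hs
      simp [hf, max_eq_left hs]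
    · set f : ℝ → ℝ := fun s => τ (max s a) with hf
      have hfm : Antitone f := fun s t hst =>
        hant (le_max_right s a) (le_max_right t a) (max_le_max hst le_rfl)
      have hbdd : BddBelow (range f) := by
        refine ⟨-1, ?_⟩
        rintro x ⟨s, rfl⟩
        exact (hmem _ (le_trans ha (le_max_right s a))).1
      refine ⟨⨅ s, f s, (tendsto_atTop_ciInf hfm hbdd).congr' ?_⟩
      filter_upwards [eventually_ge_atTop a] with s hs
      simp [hf, max_eq_left hs]
  obtain ⟨M, hτM⟩ := hlim
  have hM1 : M ≤ 1 := le_of_tendsto hτM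
    ((eventually_ge_atTop s₀).mono fun s hs => (hmem s hs).2)
  -- limit of the derivative
  have hrpow : Tendsto (fun s => τ s ^ ((2:ℝ)/r)) atTop (nhds (M ^ ((2:ℝ)/r))) :=
    ((Real.continuousAt_rpow_const M ((2:ℝ)/r) (Or.inr hexp0.le)).tendsto).comp hτM
  have hsqrt : Tendsto (fun s => Real.sqrt (1 - τ s ^ ((2:ℝ)/r))) atTop
      (nhds (Real.sqrt (1 - M ^ ((2:ℝ)/r)))) :=
    (Real.continuous_sqrt.continuousAt.tendsto).comp (tendsto_const_nhds.sub hrpow)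
  have htanhpow : Tendsto (fun s => Real.tanh s ^ (r-1)) atTop (nhds 1) := by
    simpa using tanh_tendsto_one.pow (r-1)
  have hRHS : Tendsto (fun s => C * Real.sqrt (1 - τ s ^ ((2 : ℝ) / r)) * Real.tanh s ^ (r - 1)
        - ((n : ℝ) - r) * (Real.cosh s / Real.sinh s) * τ s) atTop
      (nhds (C * Real.sqrt (1 - M ^ ((2:ℝ)/r)) * 1 - ((n:ℝ)-r) * 1 * M)) :=
    ((tendsto_const_nhds.mul hsqrt).mul htanhpow).sub
      ((tendsto_const_nhds.mul coth_tendsto_one).mul hτM)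
  have hderiv' : Tendsto (deriv τ) atTop
      (nhds (C * Real.sqrt (1 - M ^ ((2:ℝ)/r)) * 1 - ((n:ℝ)-r) * 1 * M)) := by
    refine hRHS.congr' ?_
    filter_upwards [eventually_ge_atTop s₀] with s hs
    exact ((hode s hs).deriv).symm
  have hMroot : C * Real.sqrt (1 - M ^ ((2:ℝ)/r)) = ((n:ℝ)-r) * M := by
    have := tendsto_nhds_unique hderiv hderiv'
    linarith [this]
  -- M > 0
  have hM0 : 0 < M := by
    by_contra h
    push_neg at h
    rcases lt_or_eq_of_le h with h' | h'
    · have h1 : (0:ℝ) ≤ C * Real.sqrt (1 - M ^ ((2:ℝ)/r)) := by positivity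
      nlinarith
    · rw [h'] at hMroot
      rw [Real.zero_rpow hexp0.ne'] at hMroot
      simp at hMroot
      nlinarith [hMroot]
  -- uniqueness of the root
  have key : ∀ x y : ℝ, 0 < x → x < y → y ≤ 1 →
      C * Real.sqrt (1 - x ^ ((2:ℝ)/r)) = ((n:ℝ)-r) * x →
      C * Real.sqrt (1 - y ^ ((2:ℝ)/r)) = ((n:ℝ)-r) * y → False := by
    intro x y hx hxy hy1 hxr hyr
    have h1 : x ^ ((2:ℝ)/r) ≤ y ^ ((2:ℝ)/r) :=
      Real.rpow_le_rpow hx.le hxy.le hexp0.le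
    have h2 : Real.sqrt (1 - y ^ ((2:ℝ)/r)) ≤ Real.sqrt (1 - x ^ ((2:ℝ)/r)) :=
      Real.sqrt_le_sqrt (by linarith)
    have h3 : C * Real.sqrt (1 - y ^ ((2:ℝ)/r)) ≤ C * Real.sqrt (1 - x ^ ((2:ℝ)/r)) :=
      mul_le_mul_of_nonneg_left h2 hC0.le
    nlinarith
  have hML : M = L := by
    rcases lt_trichotomy M L with h | h | h
    · exact absurd (key M L hM0 h hL.2.le hMroot hLroot) (by simp)
    · exact h
    · exact absurd (key L M hL.1 h hM1 hLroot hMroot) (by simp)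
  rwa [hML] at hτM
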